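/- Let B be an even simple Bratteli diagram with full group G=G_B and path space X=X_B, and let A⊊X be a clopen set. Then for every x∈X∖A, the orbit G°(A)·x is infinite. -/

import Mathlib

open MeasureTheory Filter
open scoped ENNReal ComplexOrder

noncomputable section

/-- A Bratteli diagram: vertex levels `V i`, edge levels `E i` (edges from `V i` to `V (i+1)`),
all levels finite and nonempty, a single root vertex, and source/range maps that are
surjective (every vertex emits and receives an edge). -/
structure BratteliDiagram where
  V : ℕ → Type
  E : ℕ → Type
  fintypeV : ∀ i, Fintype (V i)
  fintypeE : ∀ i, Fintype (E i)
  nonemptyV : ∀ i, Nonempty (V i)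
  nonemptyE : ∀ i, Nonempty (E i)
  subsingleton_root : Subsingleton (V 0)
  src : ∀ i, E i → V i
  rng : ∀ i, E i → V (i + 1)
  src_surj : ∀ i, Function.Surjective (src i)
  rng_surj : ∀ i, Function.Surjective (rng i)

namespace BratteliDiagram

variable (B : BratteliDiagram)

/-- The path space `X_B`: infinite paths starting at the root. -/
def Path : Type :=
  { x : ∀ i, B.E i // ∀ i, B.rng i (x i) = B.src (i + 1) (x (i + 1)) }

instance (i : ℕ) : UniformSpace (B.E i) := ⊥

instance instUniformSpacePath : UniformSpace B.Path :=
  inferInstanceAs (UniformSpace { x : ∀ i, B.E i // ∀ i, B.rng i (x i) = B.src (i + 1) (x (i + 1)) })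

instance instMeasurableSpacePath : MeasurableSpace B.Path := borel _

/-- Finite segments of `L+1` consecutive edges starting at level `n`. -/
def Seg (n L : ℕ) : Type :=
  { f : ∀ i : Fin (L + 1), B.E (n + (i : ℕ)) //
    ∀ (i : ℕ) (hi : i < L),
      B.rng (n + i) (f ⟨i, by omega⟩) = B.src (n + (i + 1)) (f ⟨i + 1, by omega⟩) }

/-- The number of finite paths connecting `v ∈ V n` to `w ∈ V (n + L + 1)`. -/
def numPaths (n L : ℕ) (v : B.V n) (w : B.V (n + L + 1)) : ℕ :=
  Nat.card { f : B.Seg n L //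
    B.src n (f.1 ⟨0, by omega⟩) = v ∧ B.rng (n + L) (f.1 ⟨L, by omega⟩) = w }

/-- A Bratteli diagram is simple if every vertex of a given level is connected
to every vertex of some deeper level. -/
def IsSimple : Prop :=
  ∀ n : ℕ, ∃ L : ℕ, ∀ (v : B.V n) (w : B.V (n + L + 1)), 0 < B.numPaths n L v w

/-- A Bratteli diagram is even if every vertex of a given level is connected to every
vertex of some deeper level by a (positive) even number of paths. -/
def IsEven : Prop :=
  ∀ n : ℕ, ∃ L : ℕ, ∀ (v : B.V n) (w : B.V (n + L + 1)),
    0 < B.numPaths n L v w ∧ Even (B.numPaths n L v w)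

/-- A permutation of the path space "of level `n`": it changes only the first `n` edges,
and what it does to the first `n` edges depends only on the first `n` edges. -/
def IsLevel (n : ℕ) (g : Equiv.Perm B.Path) : Prop :=
  (∀ (x : B.Path) (i : ℕ), n ≤ i → (g x).1 i = x.1 i) ∧
  (∀ x y : B.Path, (∀ i : ℕ, i < n → x.1 i = y.1 i) → ∀ i : ℕ, i < n → (g x).1 i = (g y).1 i)

theorem isLevel_one (n : ℕ) : B.IsLevel n 1 :=
  ⟨fun _ _ _ => rfl, fun _ _ h i hi => h i hi⟩

theorem IsLevel.mul {n : ℕ} {a b : Equiv.Perm B.Path} (ha : B.IsLevel n a)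
    (hb : B.IsLevel n b) : B.IsLevel n (a * b) := by
  constructor
  · intro x i hi
    have h1 := ha.1 (b x) i hi
    have h2 := hb.1 x i hi
    simpa [Equiv.Perm.mul_apply] using h1.trans h2
  · intro x y hxy i hi
    have h2 := hb.2 x y hxy
    have := ha.2 (b x) (b y) h2 i hi
    simpa [Equiv.Perm.mul_apply] using this

theorem IsLevel.mono {n m : ℕ} (hnm : n ≤ m) {g : Equiv.Perm B.Path}
    (h : B.IsLevel n g) : B.IsLevel m g := by
  refine ⟨fun x i hi => h.1 x i (hnm.trans hi), fun x y hxy i hi => ?_⟩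
  rcases lt_or_ge i n with h' | h'
  · exact h.2 x y (fun j hj => hxy j (hj.trans_le hnm)) i h'
  · rw [h.1 x i h', h.1 y i h']
    exact hxy i hi

/-- The group `G_n` of homeomorphisms of the path space permuting only the
first `n` edges of infinite paths. -/
def level (n : ℕ) : Subgroup (Equiv.Perm B.Path) where
  carrier := { g | B.IsLevel n g ∧ B.IsLevel n g⁻¹ }
  one_mem' := ⟨B.isLevel_one n, by simpa using B.isLevel_one n⟩
  mul_mem' := by
    intro a b ha hb
    exact ⟨ha.1.mul B hb.1, by rw [mul_inv_rev]; exact IsLevel.mul B hb.2 ha.2⟩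
  inv_mem' := by
    intro a ha
    exact ⟨ha.2, by simpa using ha.1⟩

theorem level_mono {n m : ℕ} (h : n ≤ m) : B.level n ≤ B.level m := by
  intro g hg
  exact ⟨hg.1.mono B h, hg.2.mono B h⟩

/-- The full group `G_B = ⋃ n, G_n` of the Bratteli diagram. -/
def fullGroup : Subgroup (Equiv.Perm B.Path) where
  carrier := { g | ∃ n, g ∈ B.level n }
  one_mem' := ⟨0, one_mem _⟩
  mul_mem' := by
    rintro a b ⟨n, ha⟩ ⟨m, hb⟩
    exact ⟨max n m, mul_mem (B.level_mono (le_max_left n m) ha)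
      (B.level_mono (le_max_right n m) hb)⟩
  inv_mem' := by
    rintro a ⟨n, ha⟩
    exact ⟨n, inv_mem ha⟩

/-- `G_n` viewed as a subgroup of the full group. -/
def levelIn (n : ℕ) : Subgroup ↥B.fullGroup := (B.level n).comap B.fullGroup.subtype

/-- The subgroup `G°(A)` of elements of the full group fixing `A` pointwise. -/
def Gcirc (A : Set B.Path) : Subgroup ↥B.fullGroup :=
  ⨅ x ∈ A, MulAction.stabilizer ↥B.fullGroup x

/-- `G°_n(A) = G_n ∩ G°(A)`. -/
def GcircN (n : ℕ) (A : Set B.Path) : Subgroup ↥B.fullGroup :=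
  B.levelIn n ⊓ B.Gcirc A

end BratteliDiagram

/-- Conjugation of a subgroup: `g • H = gHg⁻¹`. -/
def conjSub {Γ : Type*} [Group Γ] (g : Γ) (H : Subgroup Γ) : Subgroup Γ :=
  Subgroup.map (MulAut.conj g).toMonoidHom H

/-- The Borel structure on the space `Sub(Γ)` of subgroups of `Γ`,
induced from the product space `{0,1}^Γ` (equivalently `Set Γ`). -/
instance subgroupMeasurableSpace {Γ : Type*} [Group Γ] : MeasurableSpace (Subgroup Γ) :=
  MeasurableSpace.comap (fun H => (H : Set Γ)) inferInstance

namespace BratteliDiagram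

variable (B : BratteliDiagram)

/-- `F(A)`: the collection of subgroups of the full group normalized by `G°(A)`. -/
def FF (A : Set B.Path) : Set (Subgroup ↥B.fullGroup) :=
  { H | ∀ g ∈ B.Gcirc A, conjSub g H = H }

end BratteliDiagram

/-- A measure `ν` on `Y` is invariant under the action of `G`. -/
def MeasInv (G : Type*) [Group G] {Y : Type*} [MeasurableSpace Y] [MulAction G Y]
    (ν : Measure Y) : Prop :=
  ∀ (g : G) (s : Set Y), MeasurableSet s → ν ((fun y => g • y) ⁻¹' s) = ν s

/-- The action of `G` on `(Y, ν)` is ergodic: every invariant measurable set is null or conull. -/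
def MeasErg (G : Type*) [Group G] {Y : Type*} [MeasurableSpace Y] [MulAction G Y]
    (ν : Measure Y) : Prop :=
  ∀ s : Set Y, MeasurableSet s → (∀ g : G, (fun y => g • y) ⁻¹' s = s) → ν s = 0 ∨ ν s = 1

/-- An invariant random subgroup: a conjugation-invariant Borel probability measure on `Sub(G)`. -/
def IsIRS (G : Type*) [Group G] (φ : Measure (Subgroup G)) : Prop :=
  IsProbabilityMeasure φ ∧
    ∀ (g : G) (s : Set (Subgroup G)), MeasurableSet s → φ (conjSub g ⁻¹' s) = φ s

/-- An ergodic invariant random subgroup. -/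
def IsErgodicIRS (G : Type*) [Group G] (φ : Measure (Subgroup G)) : Prop :=
  IsIRS G φ ∧
    ∀ s : Set (Subgroup G), MeasurableSet s → (∀ g : G, conjSub g ⁻¹' s = s) →
      φ s = 0 ∨ φ s = 1

/-- A character of a group: normalized, central, positive semidefinite complex function. -/
def IsCharacter (G : Type*) [Group G] (χ : G → ℂ) : Prop :=
  χ 1 = 1 ∧ (∀ a b : G, χ (a * b) = χ (b * a)) ∧
    ∀ (n : ℕ) (g : Fin n → G) (c : Fin n → ℂ),
      0 ≤ ∑ i, ∑ j, (starRingEnd ℂ) (c i) * c j * χ (g i * (g j)⁻¹)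

namespace BratteliDiagram

variable (B : BratteliDiagram)

/-- The product measure `μ_α = μ_1^{α_1} × ⋯ × μ_k^{α_k}` on `X^{|α|}`,
realized on the index type `Σ i : Fin k, Fin (α i)` (of cardinality `|α| = Σ α i`). -/
def prodMeasure {k : ℕ} (μ : Fin k → Measure B.Path) (α : Fin k → ℕ) :
    Measure ((Σ i : Fin k, Fin (α i)) → B.Path) :=
  Measure.pi fun p => μ p.1

/-- The stabilizer distribution `φ_α` of the diagonal action of the full group
on `(X^{|α|}, μ_α)`. -/
def stabDist {k : ℕ} (μ : Fin k → Measure B.Path) (α : Fin k → ℕ) :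
    Measure (Subgroup ↥B.fullGroup) :=
  Measure.map (fun y => MulAction.stabilizer ↥B.fullGroup y) (B.prodMeasure μ α)

end BratteliDiagram

section AuxGcirc

open scoped Classical

namespace BratteliDiagram

variable {B : BratteliDiagram}

theorem open_determined {A : Set B.Path} (hA : IsOpen A) {x : B.Path} (hx : x ∈ A) :
    ∃ n : ℕ, ∀ y : B.Path, (∀ i, i < n → y.1 i = x.1 i) → y ∈ A := by
  have hA' : @IsOpen _ (TopologicalSpace.induced (Subtype.val : B.Path → ∀ i, B.E i)
      (Pi.topologicalSpace (t₂ := fun i => ⊥))) A := hA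
  replace hA' := isOpen_induced_iff.mp hA'
  obtain ⟨U, hU, hUA⟩ := hA'
  have hxU : x.1 ∈ U := by rw [← hUA] at hx; exact hx
  rw [isOpen_pi_iff] at hU
  obtain ⟨I, u, hu, hsub⟩ := hU x.1 hxU
  obtain ⟨n, hn⟩ : ∃ n, ∀ i ∈ I, i < n := ⟨(I.sup id) + 1, fun i hi =>
    Nat.lt_succ_of_le (Finset.le_sup (f := id) hi)⟩
  refine ⟨n, fun y hy => ?_⟩
  have : y.1 ∈ U := by
    apply hsub
    intro i hi
    rw [hy i (hn i hi)]
    exact (hu i hi).2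
  rw [← hUA]; exact this

/-- Gluing a segment `f` into the window `[m, m+L]` of a sequence of edges `y`. -/
def glueFun (m L : ℕ) (f : ∀ j : Fin (L + 1), B.E (m + (j : ℕ))) (y : ∀ i, B.E i) :
    ∀ i, B.E i := fun i =>
  if h : m ≤ i ∧ i ≤ m + L then
    cast (congrArg B.E (by omega : m + (i - m) = i)) (f ⟨i - m, by omega⟩)
  else y i

theorem glue_low {m L : ℕ} {f : ∀ j : Fin (L + 1), B.E (m + (j : ℕ))} {y : ∀ i, B.E i}
    {i : ℕ} (h : i < m) : glueFun m L f y i = y i := dif_neg (by omega)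

theorem glue_high {m L : ℕ} {f : ∀ j : Fin (L + 1), B.E (m + (j : ℕ))} {y : ∀ i, B.E i}
    {i : ℕ} (h : m + L < i) : glueFun m L f y i = y i := dif_neg (by omega)

theorem fin_heq {L : ℕ} {C : Fin (L + 1) → Type} (f : ∀ j : Fin (L + 1), C j)
    {a b : Fin (L + 1)} (h : a = b) : HEq (f a) (f b) := by subst h; rfl

theorem glue_window {m L : ℕ} (f : ∀ j : Fin (L + 1), B.E (m + (j : ℕ))) (y : ∀ i, B.E i)
    (j : ℕ) (hj : j ≤ L) : glueFun m L f y (m + j) = f ⟨j, by omega⟩ := by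
  have h : m ≤ m + j ∧ m + j ≤ m + L := ⟨by omega, by omega⟩
  show dite _ _ _ = _
  rw [dif_pos h]
  have hjj : (⟨m + j - m, by omega⟩ : Fin (L + 1)) = ⟨j, by omega⟩ := by
    apply Fin.ext; simp
  rw [cast_eq_iff_heq]
  exact fin_heq f hjj

/-- `y` agrees with `x` below `m` and with the segment `f` on the window `[m, m+L]`. -/
def MatchesX (m L : ℕ) (x : B.Path) (f : ∀ j : Fin (L + 1), B.E (m + (j : ℕ)))
    (y : ∀ i, B.E i) : Prop :=
  (∀ i, i < m → y i = x.1 i) ∧ ∀ (j : ℕ) (hj : j ≤ L), y (m + j) = f ⟨j, by omega⟩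

theorem glue_path {m L : ℕ} (x : B.Path) (f : ∀ j : Fin (L + 1), B.E (m + (j : ℕ)))
    (hf : ∀ (i : ℕ) (hi : i < L),
      B.rng (m + i) (f ⟨i, by omega⟩) = B.src (m + (i + 1)) (f ⟨i + 1, by omega⟩))
    (hv : B.src m (f ⟨0, by omega⟩) = B.src m (x.1 m))
    (hw : B.rng (m + L) (f ⟨L, by omega⟩) = B.rng (m + L) (x.1 (m + L)))
    (y : B.Path) (hy1 : ∀ i, i < m → y.1 i = x.1 i)
    (hyW : B.rng (m + L) (y.1 (m + L)) = B.rng (m + L) (x.1 (m + L))) :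
    ∀ i, B.rng i (glueFun m L f y.1 i) = B.src (i + 1) (glueFun m L f y.1 (i + 1)) := by
  intro i
  rcases lt_or_ge (i + 1) m with h1 | h1
  · rw [glue_low (by omega), glue_low h1]; exact y.2 i
  rcases eq_or_lt_of_le h1 with h2 | h2
  · -- i + 1 = m
    subst h2
    have e0 : glueFun (i + 1) L f y.1 (i + 1) = f ⟨0, by omega⟩ :=
      glue_window f y.1 0 (by omega)
    rw [glue_low (by omega), e0, hv, hy1 i (by omega)]
    exact x.2 i
  rcases lt_or_ge i (m + L) with h3 | h3
  · -- window interior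
    obtain ⟨j, rfl⟩ : ∃ j, i = m + j := ⟨i - m, by omega⟩
    have hjL : j < L := by omega
    have e1 : glueFun m L f y.1 (m + j) = f ⟨j, by omega⟩ := glue_window f y.1 j (by omega)
    have e2 : glueFun m L f y.1 (m + j + 1) = f ⟨j + 1, by omega⟩ :=
      glue_window f y.1 (j + 1) (by omega)
    rw [e1, e2]
    exact hf j hjL
  rcases eq_or_lt_of_le h3 with h4 | h4
  · -- i = m + L
    obtain rfl : i = m + L := by omega
    have e1 : glueFun m L f y.1 (m + L) = f ⟨L, by omega⟩ := glue_window f y.1 L le_rfl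
    rw [e1, glue_high (by omega), hw, ← hyW]
    exact y.2 (m + L)
  · rw [glue_high (by omega), glue_high (by omega)]
    exact y.2 i

theorem matches_glue {m L : ℕ} (x : B.Path) (f g : ∀ j : Fin (L + 1), B.E (m + (j : ℕ)))
    {y : ∀ i, B.E i} (hy : MatchesX m L x g y) : MatchesX m L x f (glueFun m L f y) :=
  ⟨fun i hi => (glue_low hi).trans (hy.1 i hi), fun j hj => glue_window f y j hj⟩

theorem glue_glue {m L : ℕ} (x : B.Path) (f g : ∀ j : Fin (L + 1), B.E (m + (j : ℕ)))
    {y : ∀ i, B.E i} (hy : MatchesX m L x g y) (i : ℕ) :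
    glueFun m L g (glueFun m L f y) i = y i := by
  rcases lt_or_ge i m with h1 | h1
  · rw [glue_low h1, glue_low h1]
  rcases le_or_gt i (m + L) with h2 | h2
  · obtain ⟨j, rfl⟩ : ∃ j, i = m + j := ⟨i - m, by omega⟩
    have e1 : glueFun m L g (glueFun m L f y) (m + j) = g ⟨j, by omega⟩ :=
      glue_window g _ j (by omega)
    rw [e1, ← hy.2 j (by omega)]
  · rw [glue_high h2, glue_high h2]

theorem matchesX_congr {m L : ℕ} (x : B.Path) (f : ∀ j : Fin (L + 1), B.E (m + (j : ℕ)))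
    {y z : ∀ i, B.E i} (h : ∀ i, i < m + L + 1 → y i = z i) :
    MatchesX m L x f y ↔ MatchesX m L x f z := by
  constructor <;> intro hm
  · exact ⟨fun i hi => (h i (by omega)).symm.trans (hm.1 i hi),
      fun j hj => (h (m + j) (by omega)).symm.trans (hm.2 j hj)⟩
  · exact ⟨fun i hi => (h i (by omega)).trans (hm.1 i hi),
      fun j hj => (h (m + j) (by omega)).trans (hm.2 j hj)⟩


section Swap

variable {m L : ℕ} {x : B.Path} {f : ∀ j : Fin (L + 1), B.E (m + (j : ℕ))}

/-- Swap the window `[m, m+L]` of a path between the segment of `x` and the segment `f`. -/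
def swapT (m L : ℕ) (x : B.Path) (f : ∀ j : Fin (L + 1), B.E (m + (j : ℕ)))
    (hf : ∀ (i : ℕ) (hi : i < L),
      B.rng (m + i) (f ⟨i, by omega⟩) = B.src (m + (i + 1)) (f ⟨i + 1, by omega⟩))
    (hv : B.src m (f ⟨0, by omega⟩) = B.src m (x.1 m))
    (hw : B.rng (m + L) (f ⟨L, by omega⟩) = B.rng (m + L) (x.1 (m + L)))
    (y : B.Path) : B.Path :=
  if h0 : MatchesX m L x (fun j => x.1 (m + (j : ℕ))) y.1 then
    ⟨glueFun m L f y.1, glue_path x f hf hv hw y h0.1 (by rw [h0.2 L le_rfl])⟩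
  else if h1 : MatchesX m L x f y.1 then
    ⟨glueFun m L (fun j => x.1 (m + (j : ℕ))) y.1,
      glue_path x _ (fun i _ => x.2 (m + i)) rfl rfl y h1.1
        (by rw [h1.2 L le_rfl]; exact hw)⟩
  else y

variable (hf : ∀ (i : ℕ) (hi : i < L),
      B.rng (m + i) (f ⟨i, by omega⟩) = B.src (m + (i + 1)) (f ⟨i + 1, by omega⟩))
    (hv : B.src m (f ⟨0, by omega⟩) = B.src m (x.1 m))
    (hw : B.rng (m + L) (f ⟨L, by omega⟩) = B.rng (m + L) (x.1 (m + L)))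

theorem swapT_fst0 {y : B.Path} (h0 : MatchesX m L x (fun j => x.1 (m + (j : ℕ))) y.1) :
    (swapT m L x f hf hv hw y).1 = glueFun m L f y.1 := by
  unfold swapT; erw [dif_pos h0]

theorem swapT_fst1 {y : B.Path} (h0 : ¬ MatchesX m L x (fun j => x.1 (m + (j : ℕ))) y.1)
    (h1 : MatchesX m L x f y.1) :
    (swapT m L x f hf hv hw y).1 = glueFun m L (fun j => x.1 (m + (j : ℕ))) y.1 := by
  unfold swapT; erw [dif_neg h0, dif_pos h1]

theorem swapT_fst2 {y : B.Path} (h0 : ¬ MatchesX m L x (fun j => x.1 (m + (j : ℕ))) y.1)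
    (h1 : ¬ MatchesX m L x f y.1) :
    swapT m L x f hf hv hw y = y := by
  unfold swapT; erw [dif_neg h0, dif_neg h1]

theorem swapT_invol (hne : ∃ j, ∃ _ : j ≤ L, x.1 (m + j) ≠ f ⟨j, by omega⟩) :
    Function.Involutive (swapT m L x f hf hv hw) := by
  intro y
  by_cases h0 : MatchesX m L x (fun j => x.1 (m + (j : ℕ))) y.1
  · have hm1 : MatchesX m L x f (swapT m L x f hf hv hw y).1 := by
      rw [swapT_fst0 hf hv hw h0]; exact matches_glue x f _ h0
    have hm0 : ¬ MatchesX m L x (fun j => x.1 (m + (j : ℕ)))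
        (swapT m L x f hf hv hw y).1 := by
      intro hc
      obtain ⟨j, hj, hnej⟩ := hne
      apply hnej
      have h1 := hc.2 j hj
      rw [swapT_fst0 hf hv hw h0, glue_window f y.1 j hj] at h1
      exact h1.symm
    apply Subtype.ext
    rw [swapT_fst1 hf hv hw hm0 hm1, swapT_fst0 hf hv hw h0]
    funext i
    exact glue_glue x f _ h0 i
  · by_cases h1 : MatchesX m L x f y.1
    · have hm0 : MatchesX m L x (fun j => x.1 (m + (j : ℕ)))
          (swapT m L x f hf hv hw y).1 := by
        rw [swapT_fst1 hf hv hw h0 h1]; exact matches_glue x _ f h1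
      apply Subtype.ext
      rw [swapT_fst0 hf hv hw hm0, swapT_fst1 hf hv hw h0 h1]
      funext i
      exact glue_glue x _ f h1 i
    · rw [swapT_fst2 hf hv hw h0 h1, swapT_fst2 hf hv hw h0 h1]

theorem swapT_high {y : B.Path} {i : ℕ} (hi : m + L + 1 ≤ i) :
    (swapT m L x f hf hv hw y).1 i = y.1 i := by
  unfold swapT
  by_cases h0 : MatchesX m L x (fun j => x.1 (m + (j : ℕ))) y.1
  · erw [dif_pos h0]
    show glueFun m L f y.1 i = y.1 i
    exact glue_high (by omega)
  by_cases h1 : MatchesX m L x f y.1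
  · erw [dif_neg h0, dif_pos h1]
    show glueFun m L (fun j => x.1 (m + (j : ℕ))) y.1 i = y.1 i
    exact glue_high (by omega)
  · erw [dif_neg h0, dif_neg h1]

theorem glue_congr {y z : ∀ i, B.E i} (g : ∀ j : Fin (L + 1), B.E (m + (j : ℕ)))
    (h : ∀ i, i < m → y i = z i) {i : ℕ} (hi : i ≤ m + L) :
    glueFun m L g y i = glueFun m L g z i := by
  rcases lt_or_ge i m with h1 | h1
  · rw [glue_low h1, glue_low h1]; exact h i h1
  · obtain ⟨j, rfl⟩ : ∃ j, i = m + j := ⟨i - m, by omega⟩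
    rw [glue_window g y j (by omega), glue_window g z j (by omega)]

theorem swapT_prefix_congr {y z : B.Path} (h : ∀ i, i < m + L + 1 → y.1 i = z.1 i)
    {i : ℕ} (hi : i < m + L + 1) :
    (swapT m L x f hf hv hw y).1 i = (swapT m L x f hf hv hw z).1 i := by
  have hiff0 := matchesX_congr x (fun j => x.1 (m + (j : ℕ))) h
  have hiff1 := matchesX_congr x f h
  unfold swapT
  by_cases h0 : MatchesX m L x (fun j => x.1 (m + (j : ℕ))) y.1
  · erw [dif_pos h0, dif_pos (hiff0.mp h0)]
    show glueFun m L f y.1 i = glueFun m L f z.1 i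
    exact glue_congr f (fun i hi => h i (by omega)) (by omega)
  · erw [dif_neg h0, dif_neg (fun hc => h0 (hiff0.mpr hc))]
    by_cases h1 : MatchesX m L x f y.1
    · erw [dif_pos h1, dif_pos (hiff1.mp h1)]
      show glueFun m L (fun j => x.1 (m + (j : ℕ))) y.1 i
          = glueFun m L (fun j => x.1 (m + (j : ℕ))) z.1 i
      exact glue_congr _ (fun i hi => h i (by omega)) (by omega)
    · erw [dif_neg h1, dif_neg (fun hc => h1 (hiff1.mpr hc))]
      exact h i hi

theorem swapT_fix {y : B.Path} (hne' : ¬ ∀ i, i < m → y.1 i = x.1 i) :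
    swapT m L x f hf hv hw y = y :=
  swapT_fst2 hf hv hw (fun h => hne' h.1) (fun h => hne' h.1)

theorem matchesX_self : MatchesX m L x (fun j => x.1 (m + (j : ℕ))) x.1 :=
  ⟨fun _ _ => rfl, fun _ _ => rfl⟩

theorem swapT_x_prefix {i : ℕ} (hi : i < m) :
    (swapT m L x f hf hv hw x).1 i = x.1 i := by
  rw [swapT_fst0 hf hv hw matchesX_self]
  exact glue_low hi

theorem swapT_x_ne (hne : ∃ j, ∃ _ : j ≤ L, x.1 (m + j) ≠ f ⟨j, by omega⟩) :
    swapT m L x f hf hv hw x ≠ x := by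
  obtain ⟨j, hj, hnej⟩ := hne
  intro hc
  apply hnej
  have h1 : (swapT m L x f hf hv hw x).1 (m + j) = f ⟨j, by omega⟩ := by
    rw [swapT_fst0 hf hv hw matchesX_self]
    exact glue_window f x.1 j hj
  rw [hc] at h1
  exact h1

include hf hv hw in
/-- Packaged form: the swap permutation with all the properties we need. -/
theorem exists_good_perm (hne : ∃ j, ∃ _ : j ≤ L, x.1 (m + j) ≠ f ⟨j, by omega⟩) :
    ∃ g : Equiv.Perm B.Path, g⁻¹ = g ∧ B.IsLevel (m + L + 1) g ∧
      (∀ y : B.Path, (¬ ∀ i, i < m → y.1 i = x.1 i) → g y = y) ∧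
      (∀ i, i < m → (g x).1 i = x.1 i) ∧ g x ≠ x := by
  refine ⟨Function.Involutive.toPerm _ (swapT_invol hf hv hw hne), ?_, ⟨?_, ?_⟩, ?_, ?_, ?_⟩
  · exact Equiv.ext fun y => rfl
  · exact fun y i hi => swapT_high hf hv hw hi
  · exact fun y z hyz i hi => swapT_prefix_congr hf hv hw hyz hi
  · exact fun y hy => swapT_fix hf hv hw hy
  · exact fun i hi => swapT_x_prefix hf hv hw hi
  · exact swapT_x_ne hf hv hw hne

end Swap

end BratteliDiagram

end AuxGcirc

/-- for a proper clopen set `A` and `x ∉ A`, the orbit `G°(A)·x` is infinite. -/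
theorem Gcirc_orbit_infinite (B : BratteliDiagram)
    (hsimple : B.IsSimple) (heven : B.IsEven)
    (A : Set B.Path) (hA : IsClopen A) (hAne : A ≠ Set.univ)
    (x : B.Path) (hx : x ∉ A) :
    (MulAction.orbit ↥(B.Gcirc A) x).Infinite := by
  classical
  by_contra hfin
  rw [Set.not_infinite] at hfin
  obtain ⟨n, hn⟩ := BratteliDiagram.open_determined hA.1.isOpen_compl (hx : x ∈ Aᶜ)
  -- a bound below which all points of the (assumed finite) orbit are determined
  have hNex : ∃ N, ∀ y ∈ MulAction.orbit ↥(B.Gcirc A) x, y ≠ x →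
      ∃ i, i < N ∧ y.1 i ≠ x.1 i := by
    refine Set.Finite.induction_on _ hfin ⟨0, fun y hy _ => absurd hy (Set.notMem_empty y)⟩ ?_
    rintro a s - - ⟨N, hN⟩
    by_cases hax : a = x
    · exact ⟨N, fun y hy hyx => hN y (by
        rcases Set.mem_insert_iff.mp hy with h | h
        · exact absurd (h.trans hax) hyx
        · exact h) hyx⟩
    · obtain ⟨i, hi⟩ : ∃ i, a.1 i ≠ x.1 i := by
        by_contra hc
        push_neg at hc
        exact hax (Subtype.ext (funext hc))
      refine ⟨max N (i + 1), fun y hy hyx => ?_⟩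
      rcases Set.mem_insert_iff.mp hy with h | h
      · exact ⟨i, by omega, h ▸ hi⟩
      · obtain ⟨j, hj, hj'⟩ := hN y h hyx
        exact ⟨j, by omega, hj'⟩
  obtain ⟨N, hN⟩ := hNex
  -- the level `m` and window length `L`
  obtain ⟨L, hL⟩ := heven (max n N)
  set m := max n N with hm
  obtain ⟨hpos, hev⟩ := hL (B.src m (x.1 m)) (B.rng (m + L) (x.1 (m + L)))
  have h2 : 1 < B.numPaths m L (B.src m (x.1 m)) (B.rng (m + L) (x.1 (m + L))) := by
    obtain ⟨c, hc⟩ := hev; omega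
  haveI hFE : ∀ i, Finite (B.E i) := fun i => @Finite.of_fintype _ (B.fintypeE i)
  haveI : Finite (B.Seg m L) :=
    inferInstanceAs (Finite { f : ∀ i : Fin (L + 1), B.E (m + (i : ℕ)) //
      ∀ (i : ℕ) (hi : i < L),
        B.rng (m + i) (f ⟨i, by omega⟩) = B.src (m + (i + 1)) (f ⟨i + 1, by omega⟩) })
  have hnt : Nontrivial { f : B.Seg m L //
      B.src m (f.1 ⟨0, Nat.succ_pos L⟩) = B.src m (x.1 m) ∧
      B.rng (m + L) (f.1 ⟨L, Nat.lt_succ_self L⟩) = B.rng (m + L) (x.1 (m + L)) } :=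
    Finite.one_lt_card_iff_nontrivial.mp h2
  -- a second segment with the same endpoints as the segment of `x`
  obtain ⟨f1, hf1⟩ := exists_ne (α := { f : B.Seg m L //
      B.src m (f.1 ⟨0, Nat.succ_pos L⟩) = B.src m (x.1 m) ∧
      B.rng (m + L) (f.1 ⟨L, Nat.lt_succ_self L⟩) = B.rng (m + L) (x.1 (m + L)) })
    ⟨⟨fun j => x.1 (m + (j : ℕ)), fun i _ => x.2 (m + i)⟩, rfl, rfl⟩
  have hne : ∃ j, ∃ _ : j ≤ L, x.1 (m + j) ≠ f1.1.1 ⟨j, by omega⟩ := by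
    by_contra hc
    push_neg at hc
    apply hf1
    apply Subtype.ext; apply Subtype.ext
    funext j
    exact (hc j.1 (by omega)).symm
  obtain ⟨g, hginv, hglev, hgfix, hgpre, hgne⟩ :=
    BratteliDiagram.exists_good_perm f1.1.2 f1.2.1 f1.2.2 hne
  have hgmem : g ∈ B.fullGroup := ⟨m + L + 1, hglev, by rw [hginv]; exact hglev⟩
  have hGc : (⟨g, hgmem⟩ : ↥B.fullGroup) ∈ B.Gcirc A := by
    refine Subgroup.mem_iInf.mpr fun y => Subgroup.mem_iInf.mpr fun hy => ?_
    rw [MulAction.mem_stabilizer_iff]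
    show g y = y
    refine hgfix y ?_
    intro hpre
    exact hn y (fun i hi => hpre i (lt_of_lt_of_le hi (le_max_left n N))) hy
  have horb : g x ∈ MulAction.orbit ↥(B.Gcirc A) x :=
    ⟨⟨⟨g, hgmem⟩, hGc⟩, rfl⟩
  obtain ⟨i, hiN, hidiff⟩ := hN (g x) horb hgne
  exact hidiff (hgpre i (lt_of_lt_of_le hiN (le_max_right n N)))
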